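/- arXiv:1407.2363 — 4 statements merged into one kernel-verified Lean document; each statement's English description precedes it below -/
import Mathlib

section
/- Let k be a field and let (M_n)_{n ∈ ℕ} be a countable family of nonzero k-vector spaces. Then the product vector space ∏_{n ∈ ℕ} M_n is not countably generated (i.e., has uncountable dimension over k). -/
open Cardinal

/-- Let k be a field and (M n) a countable family of nonzero k-vector spaces.
Then the product vector space ∏ n, M n is not countably generated. -/
theorem product_not_countably_generated_field
    (k : Type*) [Field k] (M : ℕ → Type*)
    [∀ n, AddCommGroup (M n)] [∀ n, Module k (M n)]
    (hM : ∀ n, Nontrivial (M n)) :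
    ¬ ∃ S : Set (∀ n, M n), S.Countable ∧ Submodule.span k S = ⊤ := by
  rintro ⟨S, hSc, hSspan⟩
  -- rank of the product is at most ℵ₀
  have hrank_le : Module.rank k (∀ n, M n) ≤ ℵ₀ := by
    have h1 : Module.rank k (Submodule.span k S) ≤ #S := rank_span_le S
    rw [hSspan, rank_top] at h1
    exact h1.trans hSc.le_aleph0
  -- choose nonzero vectors
  choose v hv using fun n => exists_ne (0 : M n)
  -- linear map (ℕ → k) → ∏ M n
  let f : (ℕ → k) →ₗ[k] (∀ n, M n) :=
    { toFun := fun c n => c n • v n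
      map_add' := fun a b => by ext n; simp [add_smul]
      map_smul' := fun a b => by ext n; simp [mul_smul] }
  have hf : Function.Injective f := by
    intro a b hab
    funext n
    have := congrFun hab n
    simp only [f, LinearMap.coe_mk, AddHom.coe_mk] at this
    by_contra hne
    have := sub_eq_zero.mpr this
    rw [← sub_smul] at this
    rcases smul_eq_zero.mp this with h | h
    · exact hne (sub_eq_zero.mp h)
    · exact hv n h
  have h2 : Cardinal.lift.{_} (Module.rank k (ℕ → k)) ≤
      Cardinal.lift (Module.rank k (∀ n, M n)) := f.lift_rank_le_of_injective hf
  have h3 : Module.rank k (ℕ → k) = #(ℕ → k) := rank_fun_infinite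
  have h4 : ℵ₀ < #(ℕ → k) := by
    have h2k : (2 : Cardinal) ≤ #k := Cardinal.two_le_iff.mpr ⟨0, 1, zero_ne_one⟩
    calc ℵ₀ < 2 ^ ℵ₀ := Cardinal.cantor ℵ₀
    _ ≤ #k ^ ℵ₀ := Cardinal.power_le_power_right h2k
    _ = #(ℕ → k) := by rw [Cardinal.mk_arrow]; simp
  have h7 := h2.trans (Cardinal.lift_le_aleph0.mpr hrank_le)
  rw [Cardinal.lift_le_aleph0, h3] at h7
  exact absurd h7 h4.not_ge
end

section
/- Let R be a commutative artinian ring and let (M_n)_{n ∈ ℕ} be a countable family of nonzero R-modules. Then the direct product ∏_{n ∈ ℕ} M_n is not countably generated as an R-module. -/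
open Function Submodule Cardinal

-- Step A: the field case for `ℕ → K`.
open scoped Classical in
lemma aux_field_case (K : Type*) [Field K] {S : Set (ℕ → K)} (hS : S.Countable)
    (htop : Submodule.span K S = ⊤) : False := by
  have hrank : Module.rank K (ℕ → K) ≤ ℵ₀ := by
    rw [← rank_top K (ℕ → K), ← htop]
    exact (rank_span_le (R := K) S).trans hS.le_aleph0
  have hK : #K ≤ ℵ₀ :=
    le_of_max_le_right ((max_aleph0_card_le_rank_fun_nat (K := K)).trans hrank)
  haveI : Countable K := mk_le_aleph0_iff.mp hK
  haveI : Countable S := hS.to_subtype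
  have hsurj : Surjective (Finsupp.linearCombination K ((↑) : S → (ℕ → K))) := by
    rw [← LinearMap.range_eq_top, Finsupp.range_linearCombination, Subtype.range_coe]
    exact htop
  haveI : Countable (ℕ → K) := hsurj.countable
  obtain ⟨x, y, hxy⟩ := exists_pair_ne K
  have hinj : Injective (fun (s : Set ℕ) => fun n => if n ∈ s then x else y) := by
    intro s t hst
    ext n
    have h := congrFun hst n
    by_cases hs : n ∈ s <;> by_cases ht : n ∈ t <;> simp_all
  haveI : Countable (Set ℕ) := hinj.countable
  obtain ⟨f, hf⟩ := countable_iff_exists_surjective.mp ‹Countable (Set ℕ)›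
  exact cantor_surjective f hf

-- Step B: transferring spans along a compatible change of scalars.
lemma aux_span_transfer {R A X : Type*} [Semiring R] [Semiring A] [AddCommMonoid X]
    [Module R X] [Module A X] (σ : R → A)
    (hcompat : ∀ (r : R) (x : X), σ r • x = r • x) {S : Set X}
    (h : Submodule.span R S = ⊤) : Submodule.span A S = ⊤ := by
  rw [eq_top_iff]
  intro x _
  have hx : x ∈ Submodule.span R S := h ▸ Submodule.mem_top
  refine Submodule.span_induction (p := fun x _ => x ∈ Submodule.span A S)
    (fun y hy => Submodule.subset_span hy) (Submodule.zero_mem _)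
    (fun y z _ _ hy hz => Submodule.add_mem _ hy hz) ?_ hx
  intro r y _ hy
  rw [← hcompat]
  exact Submodule.smul_mem _ _ hy

-- Step C: nilpotent Nakayama.
lemma aux_nakayama {R : Type*} [CommRing R] {J : Ideal R} (hJ : IsNilpotent J)
    (X : Type*) [AddCommGroup X] [Module R X] [Nontrivial X] :
    (J • ⊤ : Submodule R X) ≠ ⊤ := by
  intro h
  obtain ⟨k, hk⟩ := hJ
  have key : ∀ i, (J ^ i • ⊤ : Submodule R X) = ⊤ := by
    intro i
    induction i with
    | zero => simp
    | succ i ih => rw [pow_succ, ← Ideal.smul_eq_mul, Submodule.smul_assoc, h, ih]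
  have h2 := key k
  rw [hk] at h2
  rw [show (0 : Ideal R) = ⊥ from rfl, Submodule.bot_smul] at h2
  exact absurd h2 bot_ne_top

-- Step D: the semisimple case.
lemma aux_semisimple_case (A : Type*) [CommRing A] [IsArtinianRing A] [IsSemisimpleRing A]
    (N : ℕ → Type*) [∀ n, AddCommGroup (N n)] [∀ n, Module A (N n)]
    (hN : ∀ n, Nontrivial (N n)) {S : Set (∀ n, N n)} (hS : S.Countable)
    (hspan : Submodule.span A S = ⊤) : False := by
  classical
  -- every `N n` surjects onto `A ⧸ m` for some maximal ideal `m`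
  have key : ∀ n, ∃ m : Ideal A, m.IsMaximal ∧
      ∃ f : N n →ₗ[A] A ⧸ m, Surjective f := by
    intro n
    rcases eq_top_or_exists_le_coatom (⊥ : Submodule A (N n)) with h | ⟨P, hP, -⟩
    · exact absurd h.symm top_ne_bot
    haveI : IsSimpleModule A (N n ⧸ P) := isSimpleModule_iff_isCoatom.mpr hP
    obtain ⟨m, hm, ⟨e⟩⟩ := isSimpleModule_iff_quot_maximal.mp this
    exact ⟨m, hm, e.toLinearMap ∘ₗ P.mkQ, e.surjective.comp P.mkQ_surjective⟩
  choose m hmax f hf using key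
  haveI : Finite {I : Ideal A | I.IsMaximal} :=
    (IsArtinianRing.setOfPred_isMaximal_finite A).to_subtype
  obtain ⟨m₀, hfib⟩ := Finite.exists_infinite_fiber
    (fun n => (⟨m n, hmax n⟩ : {I : Ideal A | I.IsMaximal}))
  set T : Set ℕ :=
    (fun n => (⟨m n, hmax n⟩ : {I : Ideal A | I.IsMaximal})) ⁻¹' {m₀} with hTdef
  haveI : Infinite T := hfib
  have hT : ∀ n, n ∈ T → m n = (m₀ : Ideal A) := by
    intro n hn
    have : (⟨m n, hmax n⟩ : {I : Ideal A | I.IsMaximal}) = m₀ := hn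
    exact congrArg Subtype.val this
  haveI : (m₀ : Ideal A).IsMaximal := m₀.2
  -- the projection onto `T → A ⧸ m₀`
  let g : ∀ t : T, (∀ n, N n) →ₗ[A] A ⧸ (m₀ : Ideal A) := fun t =>
    (Submodule.quotEquivOfEq _ _ (hT t t.2)).toLinearMap ∘ₗ (f t) ∘ₗ LinearMap.proj (t : ℕ)
  let φ : (∀ n, N n) →ₗ[A] (T → A ⧸ (m₀ : Ideal A)) := LinearMap.pi g
  have hφ : Surjective φ := by
    intro y
    have hex : ∀ t : T, ∃ v : N t,
        f t v = (Submodule.quotEquivOfEq _ _ (hT t t.2)).symm (y t) := fun t => hf t _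
    choose v hv using hex
    refine ⟨fun n => if h : n ∈ T then v ⟨n, h⟩ else 0, ?_⟩
    funext t
    have : (⟨(t : ℕ), t.2⟩ : T) = t := Subtype.coe_eta t t.2
    simp only [φ, g, LinearMap.pi_apply, LinearMap.comp_apply, LinearMap.proj_apply,
      dif_pos t.2, this, hv t, LinearEquiv.coe_toLinearMap, LinearEquiv.apply_symm_apply]
  have h2 : Submodule.span A (φ '' S) = ⊤ := by
    rw [Submodule.span_image, hspan, Submodule.map_top, LinearMap.range_eq_top.mpr hφ]
  -- change scalars to the residue field and reindex by ℕ
  letI : Field (A ⧸ (m₀ : Ideal A)) := Ideal.Quotient.field _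
  have hone : ∀ (a : A) (b : A ⧸ (m₀ : Ideal A)),
      (Ideal.Quotient.mk (m₀ : Ideal A) a) • b = a • b := by
    intro a b
    obtain ⟨c, rfl⟩ := Submodule.Quotient.mk_surjective _ b
    rfl
  have hcompat : ∀ (a : A) (x : T → A ⧸ (m₀ : Ideal A)),
      (Ideal.Quotient.mk (m₀ : Ideal A) a) • x = a • x := by
    intro a x
    funext t
    exact hone a (x t)
  have h3 : Submodule.span (A ⧸ (m₀ : Ideal A)) (φ '' S) = ⊤ :=
    aux_span_transfer (Ideal.Quotient.mk (m₀ : Ideal A)) hcompat h2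
  obtain ⟨e⟩ : Nonempty (ℕ ≃ T) := nonempty_equiv_of_countable
  let ψ := LinearEquiv.funCongrLeft (A ⧸ (m₀ : Ideal A)) (A ⧸ (m₀ : Ideal A)) e
  refine aux_field_case (A ⧸ (m₀ : Ideal A)) ((hS.image φ).image ψ) ?_
  rw [← LinearEquiv.coe_coe, Submodule.span_image, h3, Submodule.map_top, LinearEquiv.range]


/-- Let R be a commutative artinian ring and (M n) a countable family of nonzero
R-modules. Then ∏ n, M n is not countably generated as an R-module. -/
theorem product_not_countably_generated_artinian
    (R : Type*) [CommRing R] [IsArtinianRing R] (M : ℕ → Type*)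
    [∀ n, AddCommGroup (M n)] [∀ n, Module R (M n)]
    (hM : ∀ n, Nontrivial (M n)) :
    ¬ ∃ S : Set (∀ n, M n), S.Countable ∧ Submodule.span R S = ⊤ := by
  rintro ⟨S, hSc, hSs⟩
  have hJnil : IsNilpotent (nilradical R) := by
    obtain ⟨k, hk⟩ := IsArtinianRing.isNilpotent_jacobson_bot (R := R)
    refine ⟨k, le_antisymm ?_ bot_le⟩
    calc nilradical R ^ k ≤ Ideal.jacobson (⊥ : Ideal R) ^ k :=
          Ideal.pow_right_mono Ideal.radical_le_jacobson k
      _ = ⊥ := hk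
  haveI hQnt : ∀ n, Nontrivial (M n ⧸ (nilradical R • ⊤ : Submodule R (M n))) := fun n =>
    Submodule.Quotient.nontrivial_iff.mpr (aux_nakayama hJnil (M n))
  let p : (∀ n, M n) →ₗ[R] (∀ n, M n ⧸ (nilradical R • ⊤ : Submodule R (M n))) :=
    LinearMap.pi (fun n => (nilradical R • ⊤ : Submodule R (M n)).mkQ ∘ₗ LinearMap.proj n)
  have hp : Surjective p := by
    intro y
    have hy : ∀ n, ∃ x : M n, Submodule.Quotient.mk x = y n := fun n =>
      Submodule.Quotient.mk_surjective _ (y n)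
    choose x hx using hy
    exact ⟨x, funext hx⟩
  have h1 : Submodule.span R (p '' S) = ⊤ := by
    rw [Submodule.span_image, hSs, Submodule.map_top, LinearMap.range_eq_top.mpr hp]
  haveI : IsReduced (R ⧸ nilradical R) :=
    (Ideal.isRadical_iff_quotient_reduced _).mp (Ideal.radical_isRadical (0 : Ideal R))
  haveI : IsSemisimpleRing (R ⧸ nilradical R) :=
    IsArtinianRing.isSemisimpleRing_of_isReduced (R := R ⧸ nilradical R)
  have hone : ∀ (n : ℕ) (r : R) (b : M n ⧸ (nilradical R • ⊤ : Submodule R (M n))),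
      (Ideal.Quotient.mk (nilradical R)) r • b = r • b := by
    intro n r b
    obtain ⟨y, rfl⟩ := Submodule.Quotient.mk_surjective _ b
    rfl
  have h2 : Submodule.span (R ⧸ nilradical R) (p '' S) = ⊤ :=
    aux_span_transfer (Ideal.Quotient.mk (nilradical R))
      (fun r x => funext fun n => hone n r (x n)) h1
  exact aux_semisimple_case (R ⧸ nilradical R) _ (fun n => hQnt n) (hSc.image p) h2
end

section
/- Let R be a ring and M a nonzero R-module whose endomorphism ring is local. If M ⊕ A ≅ M ⊕ B as R-modules, then A ≅ B. -/
/-- In a local ring, a left-invertible element is a unit. -/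
lemma isUnit_of_leftInv {S : Type*} [Ring S] [IsLocalRing S] {f t : S}
    (h : t * f = 1) : IsUnit f := by
  rcases IsLocalRing.isUnit_or_isUnit_of_add_one (a := f * t) (b := 1 - f * t) (by abel) with h1 | h1
  · obtain ⟨u, hu⟩ := h1
    have hr : f * (t * ↑u⁻¹) = 1 := by rw [← mul_assoc, ← hu, u.mul_inv]
    have ht : t * ↑u⁻¹ = t := by
      calc t * ↑u⁻¹ = (t * f) * (t * ↑u⁻¹) := by rw [h, one_mul]
        _ = t * (f * (t * ↑u⁻¹)) := by rw [mul_assoc]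
        _ = t := by rw [hr, mul_one]
    rw [ht] at hr
    exact ⟨⟨f, t, hr, h⟩, rfl⟩
  · exfalso
    have h0 : (1 - f * t) * f = 0 := by
      rw [sub_mul, one_mul, mul_assoc, h, mul_one, sub_self]
    obtain ⟨u, hu⟩ := h1
    have hf : f = 0 := by
      have := congrArg (fun x => (↑u⁻¹ : S) * x) h0
      simpa [← hu, ← mul_assoc] using this
    rw [hf, mul_zero] at h
    exact one_ne_zero h.symm

/-- Schur complement: if the M-corner of an iso M×A ≃ M×B is bijective, then A ≃ B. -/
lemma schur_cancel {R M A B : Type*} [Ring R]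
    [AddCommGroup M] [Module R M] [AddCommGroup A] [Module R A]
    [AddCommGroup B] [Module R B]
    (E : (M × A) ≃ₗ[R] (M × B))
    (hf : Function.Bijective
      (LinearMap.fst R M B ∘ₗ (E : (M × A) →ₗ[R] (M × B)) ∘ₗ LinearMap.inl R M A)) :
    Nonempty (A ≃ₗ[R] B) := by
  set F : M →ₗ[R] M := LinearMap.fst R M B ∘ₗ (E : (M × A) →ₗ[R] (M × B)) ∘ₗ LinearMap.inl R M A with hF
  set g : A →ₗ[R] M := LinearMap.fst R M B ∘ₗ (E : (M × A) →ₗ[R] (M × B)) ∘ₗ LinearMap.inr R M A with hg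
  set h : M →ₗ[R] B := LinearMap.snd R M B ∘ₗ (E : (M × A) →ₗ[R] (M × B)) ∘ₗ LinearMap.inl R M A with hh
  set k : A →ₗ[R] B := LinearMap.snd R M B ∘ₗ (E : (M × A) →ₗ[R] (M × B)) ∘ₗ LinearMap.inr R M A with hk
  have hE : ∀ (m : M) (a : A), E (m, a) = (F m + g a, h m + k a) := by
    intro m a
    have : (m, a) = (m, (0 : A)) + ((0 : M), a) := by simp
    rw [this, map_add]
    simp [hF, hg, hh, hk, Prod.ext_iff]
  let fe : M ≃ₗ[R] M := LinearEquiv.ofBijective F hf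
  have hfe : ∀ m, fe m = F m := fun m => rfl
  set S : A →ₗ[R] B := k - h ∘ₗ (fe.symm : M →ₗ[R] M) ∘ₗ g with hS
  have hSa : ∀ a, S a = k a - h (fe.symm (g a)) := by intro a; simp [hS]
  have hinj : Function.Injective S := by
    intro a a' haa
    have key : ∀ a : A, E (-(fe.symm (g a)), a) = (0, S a) := by
      intro a
      rw [hE]
      have h1 : F (-(fe.symm (g a))) = -(g a) := by
        rw [map_neg, ← hfe, fe.apply_symm_apply]
      rw [h1, hSa]
      simp only [map_neg, Prod.mk.injEq]
      constructor <;> abel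
    have heq := (key a).trans (by rw [haa, ← key a'])
    have := E.injective heq
    exact (Prod.ext_iff.mp this).2
  have hsurj : Function.Surjective S := by
    intro b
    obtain ⟨⟨m, a⟩, hma⟩ := E.surjective (0, b)
    rw [hE] at hma
    have h1 : F m + g a = 0 := congrArg Prod.fst hma
    have h2 : h m + k a = b := congrArg Prod.snd hma
    have hm : fe m = -(g a) := by rw [hfe]; exact eq_neg_of_add_eq_zero_left h1
    have hm' : m = fe.symm (-(g a)) := by rw [← hm, fe.symm_apply_apply]
    have hhm : h m = -(h (fe.symm (g a))) := by rw [hm', map_neg, map_neg]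
    refine ⟨a, ?_⟩
    rw [hSa, ← h2, hhm]
    abel
  exact ⟨LinearEquiv.ofBijective S ⟨hinj, hsurj⟩⟩

/-- Cancellation for modules with local endomorphism ring: if End_R M is local
and M ⊕ A ≅ M ⊕ B, then A ≅ B. -/
theorem cancellation_of_localEndRing
    (R M A B : Type*) [Ring R]
    [AddCommGroup M] [Module R M] [AddCommGroup A] [Module R A]
    [AddCommGroup B] [Module R B]
    [Nontrivial M] [IsLocalRing (Module.End R M)]
    (e : (M × A) ≃ₗ[R] (M × B)) :
    Nonempty (A ≃ₗ[R] B) := by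
  set f : Module.End R M :=
    LinearMap.fst R M B ∘ₗ (e : (M × A) →ₗ[R] (M × B)) ∘ₗ LinearMap.inl R M A with hfdef
  set h : M →ₗ[R] B :=
    LinearMap.snd R M B ∘ₗ (e : (M × A) →ₗ[R] (M × B)) ∘ₗ LinearMap.inl R M A with hhdef
  set f' : Module.End R M :=
    LinearMap.fst R M A ∘ₗ (e.symm : (M × B) →ₗ[R] (M × A)) ∘ₗ LinearMap.inl R M B with hf'def
  set g' : B →ₗ[R] M :=
    LinearMap.fst R M A ∘ₗ (e.symm : (M × B) →ₗ[R] (M × A)) ∘ₗ LinearMap.inr R M B with hg'def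
  have heM : ∀ m : M, e (m, 0) = (f m, h m) := by
    intro m; exact Prod.ext (by simp [hfdef]) (by simp [hhdef])
  have key : ∀ m : M, f' (f m) + g' (h m) = m := by
    intro m
    have h2 : e.symm (f m, h m) = (m, 0) := by rw [← heM, e.symm_apply_apply]
    have h3 : ((f m : M), (0 : B)) + ((0 : M), h m) = (f m, h m) := by simp
    calc f' (f m) + g' (h m) = (e.symm ((f m, 0) + (0, h m))).1 := by
          rw [map_add]; simp [hf'def, hg'def]
      _ = m := by rw [h3, h2]
  have keyE : f' * f + (g' ∘ₗ h : Module.End R M) = 1 := by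
    ext m
    simpa [Module.End.mul_eq_comp] using key m
  rcases IsLocalRing.isUnit_or_isUnit_of_add_one keyE with hu | hu
  · -- f has a left inverse, hence is a unit, hence bijective; apply Schur
    obtain ⟨u, hu⟩ := hu
    have hleft : ((↑u⁻¹ : Module.End R M) * f') * f = 1 := by
      rw [mul_assoc, ← hu, u.inv_mul]
    have hfu : IsUnit f := isUnit_of_leftInv hleft
    exact schur_cancel e ((Module.End.isUnit_iff f).mp hfu)
  · -- g' ∘ h is a unit; twist e so that the corner becomes the identity
    obtain ⟨u, hu⟩ := hu
    set α : B →ₗ[R] M := (↑u⁻¹ : Module.End R M) ∘ₗ g' with hαdef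
    have hα : ∀ m : M, α (h m) = m := by
      intro m
      have : α ∘ₗ h = (1 : Module.End R M) := by
        rw [hαdef, LinearMap.comp_assoc, ← hu, ← Module.End.mul_eq_comp, u.inv_mul]
      exact DFunLike.congr_fun this m
    set p : (M × B) →ₗ[R] (M × B) :=
      (α ∘ₗ LinearMap.snd R M B).prod
        (LinearMap.snd R M B - h ∘ₗ α ∘ₗ LinearMap.snd R M B + h ∘ₗ LinearMap.fst R M B)
      with hpdef
    set q : (M × B) →ₗ[R] (M × B) :=
      (α ∘ₗ LinearMap.snd R M B).prod
        (LinearMap.snd R M B + h ∘ₗ LinearMap.fst R M B - h ∘ₗ α ∘ₗ LinearMap.snd R M B)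
      with hqdef
    have hpq : p ∘ₗ q = LinearMap.id := by
      ext x <;> simp [hpdef, hqdef, hα, map_add, map_sub]
    have hqp : q ∘ₗ p = LinearMap.id := by
      ext x <;> simp [hpdef, hqdef, hα, map_add, map_sub]
    set P : (M × B) ≃ₗ[R] (M × B) := LinearEquiv.ofLinear p q hpq hqp with hPdef
    have hcorner : Function.Bijective
        (LinearMap.fst R M B ∘ₗ ((e.trans P) : (M × A) →ₗ[R] (M × B)) ∘ₗ LinearMap.inl R M A) := by
      have : ∀ m : M, (LinearMap.fst R M B ∘ₗ ((e.trans P) : (M × A) →ₗ[R] (M × B)) ∘ₗ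
          LinearMap.inl R M A) m = m := by
        intro m
        simp only [LinearMap.comp_apply, LinearMap.inl_apply, LinearEquiv.coe_coe,
          LinearEquiv.trans_apply, heM m, hPdef, LinearEquiv.ofLinear_apply, hpdef,
          LinearMap.prod_apply, LinearMap.fst_apply, Pi.prod]
        exact hα m
      have hid : (LinearMap.fst R M B ∘ₗ ((e.trans P) : (M × A) →ₗ[R] (M × B)) ∘ₗ
          LinearMap.inl R M A) = LinearMap.id := LinearMap.ext this
      rw [hid]
      exact Function.bijective_id
    exact schur_cancel (e.trans P) hcorner
end

section
/- Let R be a commutative noetherian domain of Krull dimension 1, (A_n)_{n ∈ ℕ} a countable family of nonzero ideals, and B a maximal ideal. For a fixed finitely generated R-module M with torsion-free submodule U ⊆ M such that M/U is torsion and annihilated by A (a nonzero ideal): if (C_n)_{n ∈ ℕ} enumerates all finite products of ideals from {A} ∪ {B^m : m ∈ ℕ}, then ⋂_{n ∈ ℕ} C_n M = 0. -/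
/-- Let R be a commutative noetherian domain of Krull dimension 1 (not a field),
M a finitely generated module with a torsion-free submodule U such that M/U is
torsion and annihilated by a nonzero ideal A, and B a maximal ideal.  If (C n)
enumerates all finite products of ideals taken from {A} ∪ {Bᵐ : m ∈ ℕ}, then
⋂ n, C n • M = 0. -/
theorem inf_enumerated_products_smul_eq_bot
    (R : Type*) [CommRing R] [IsDomain R] [IsNoetherianRing R]
    (hdim : ringKrullDim R = 1) (hnf : ¬ IsField R)
    (M : Type*) [AddCommGroup M] [Module R M] [Module.Finite R M]
    (U : Submodule R M) (hUfg : U.FG)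
    (hUtf : ∀ (r : R), r ≠ 0 → ∀ u ∈ U, r • u = 0 → u = 0)
    (A : Ideal R) (hA : A ≠ ⊥)
    (hAann : ∀ a ∈ A, ∀ m : M, a • m ∈ U)
    (B : Ideal R) (hB : B.IsMaximal)
    (C : ℕ → Ideal R)
    (hCmem : ∀ n, ∃ s : Multiset (Ideal R),
      (∀ J ∈ s, J = A ∨ ∃ m : ℕ, J = B ^ m) ∧ C n = s.prod)
    (hCsurj : ∀ s : Multiset (Ideal R),
      (∀ J ∈ s, J = A ∨ ∃ m : ℕ, J = B ^ m) → ∃ n, C n = s.prod) :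
    ⨅ n : ℕ, (C n • ⊤ : Submodule R M) = ⊥ := by
  rw [eq_bot_iff]
  intro x hx
  rw [Submodule.mem_iInf] at hx
  -- Step 1: for every m, x ∈ B^m • U
  have key : ∀ m : ℕ, x ∈ (B ^ m • U : Submodule R M) := by
    intro m
    obtain ⟨n, hn⟩ := hCsurj {A, B ^ m} (by
      intro J hJ
      rcases Multiset.mem_cons.mp hJ with h | h
      · exact Or.inl h
      · exact Or.inr ⟨m, Multiset.mem_singleton.mp h⟩)
    have hx' := hx n
    rw [hn] at hx'
    have hprod : ({A, B ^ m} : Multiset (Ideal R)).prod = B ^ m * A := by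
      simp [Multiset.prod_cons, mul_comm]
    rw [hprod, ← smul_eq_mul, Submodule.smul_assoc] at hx'
    have hAle : (A • ⊤ : Submodule R M) ≤ U :=
      Submodule.smul_le.mpr fun a ha m _ => hAann a ha m
    exact Submodule.smul_mono le_rfl hAle hx'
  have hxU : x ∈ U := by
    have := key 0
    rwa [pow_zero, Ideal.one_eq_top, Submodule.top_smul] at this
  -- Step 2: replace U by a quotient module living in the same universe as R,
  -- then apply the Krull intersection theorem
  haveI : Module.Finite R U := Module.Finite.iff_fg.mpr hUfg
  obtain ⟨k, f, hfsurj⟩ := Module.Finite.exists_fin' R U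
  let e := f.quotKerEquivOfSurjective hfsurj
  set y : U := ⟨x, hxU⟩ with hy
  have hyMem : e.symm y ∈
      (⨅ i : ℕ, B ^ i • ⊤ : Submodule R ((Fin k → R) ⧸ LinearMap.ker f)) := by
    rw [Submodule.mem_iInf]
    intro i
    have hyi : y ∈ (B ^ i • ⊤ : Submodule R U) := by
      have : x ∈ (B ^ i • ⊤ : Submodule R U).map U.subtype := by
        rw [Submodule.map_smul'', Submodule.map_top, Submodule.range_subtype]
        exact key i
      obtain ⟨z, hz, hzx⟩ := this
      have : z = y := Subtype.ext hzx
      rwa [this] at hz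
    have : e.symm y ∈ (B ^ i • ⊤ : Submodule R U).map (e.symm : U →ₗ[R] _) :=
      Submodule.mem_map_of_mem hyi
    rwa [Submodule.map_smul'', Submodule.map_top, LinearEquiv.range] at this
  obtain ⟨r, hr⟩ := (Ideal.mem_iInf_smul_pow_eq_bot_iff (I := B) (e.symm y)).mp hyMem
  have hry : (r : R) • y = y := by
    have := congrArg e hr
    rwa [map_smul, LinearEquiv.apply_symm_apply] at this
  have hne : (1 : R) - (r : R) ≠ 0 := by
    intro h
    have h1 : (1 : R) = (r : R) := sub_eq_zero.mp h
    exact hB.ne_top (Ideal.eq_top_iff_one B |>.mpr (h1 ▸ r.2))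
  have hzero : ((1 : R) - (r : R)) • x = 0 := by
    have h0 : ((1 : R) - (r : R)) • y = 0 := by
      rw [sub_smul, one_smul, hry, sub_self]
    have := congrArg (Subtype.val) h0
    simpa using this
  exact hUtf _ hne x hxU hzero
end
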